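/- Let G be a graph on vertices v₁, …, v_m, where vertex vᵢ carries real parameters (xᵢ, yᵢ), all xᵢ distinct and all yᵢ distinct, and suppose: (i) (x_i - x_j)² ≤ y_i - y_j whenever x_j < x_i (so y is order-isomorphic to x), and (ii) vᵢvⱼ is an edge exactly when (x_i - x_j)² = |y_i - y_j|. Then G contains no cycle; in particular G has at most m - 1 edges. -/

import Mathlib

open SimpleGraph

private lemma first_edge_mem {V : Type*} {G : SimpleGraph V} {a b : V} (p : G.Walk a b)
    (hp : ¬ p.Nil) : s(a, p.getVert 1) ∈ p.edges := by
  cases p with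
  | nil => simp at hp
  | cons h r =>
    rw [Walk.getVert_cons _ _ one_ne_zero]
    simp [Walk.edges_cons]

private lemma cycle_start_two_nbrs {V : Type*} {G : SimpleGraph V} {u : V}
    {d : G.Walk u u} (hd : d.IsCycle) :
    ∃ p p', p ∈ d.support ∧ p' ∈ d.support ∧ p ≠ p' ∧ G.Adj u p ∧ G.Adj u p' := by
  cases d with
  | nil => exact absurd rfl hd.ne_nil
  | cons h q =>
    rename_i w
    obtain ⟨hq, he⟩ := (Walk.cons_isCycle_iff q h).1 hd
    have h3 := hd.three_le_length
    rw [Walk.length_cons] at h3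
    have hlen : 2 ≤ q.length := by omega
    have hnn : ¬ q.reverse.Nil := by
      rw [Walk.nil_iff_length_eq, Walk.length_reverse]; omega
    have hadj' : G.Adj u (q.reverse.getVert 1) := Walk.adj_snd hnn
    have hp'memr : q.reverse.getVert 1 ∈ q.reverse.support :=
      Walk.mem_support_iff_exists_getVert.2 ⟨1, rfl, by rw [Walk.length_reverse]; omega⟩
    have hp'mem : q.reverse.getVert 1 ∈ q.support := by
      rwa [Walk.support_reverse, List.mem_reverse] at hp'memr
    have hedge : s(u, q.reverse.getVert 1) ∈ q.edges := by
      have h1 : s(u, q.reverse.getVert 1) ∈ q.reverse.edges := first_edge_mem _ hnn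
      rwa [Walk.edges_reverse, List.mem_reverse] at h1
    have hne : w ≠ q.reverse.getVert 1 := by
      intro hwe
      rw [← hwe] at hedge
      exact he hedge
    refine ⟨w, q.reverse.getVert 1, ?_, ?_, hne, h, hadj'⟩
    · rw [Walk.support_cons]; exact List.mem_cons_of_mem _ q.start_mem_support
    · rw [Walk.support_cons]; exact List.mem_cons_of_mem _ hp'mem

private lemma cycle_two_nbrs {V : Type*} [DecidableEq V] {G : SimpleGraph V} {v : V}
    {c : G.Walk v v} (hc : c.IsCycle) {u : V} (hu : u ∈ c.support) :
    ∃ p p', p ∈ c.support ∧ p' ∈ c.support ∧ p ≠ p' ∧ G.Adj u p ∧ G.Adj u p' := by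
  have hrot : (c.rotate u hu).IsCycle := hc.rotate hu
  have hmem : ∀ z, z ∈ (c.rotate u hu).support → z ∈ c.support := by
    intro z hz
    rcases (Walk.mem_support_iff _).1 hz with rfl | htl
    · exact hu
    · have hr := Walk.support_rotate c u hu
      have : z ∈ c.support.tail := hr.mem_iff.1 htl
      exact (Walk.mem_support_iff _).2 (Or.inr this)
  obtain ⟨p, p', h1, h2, h3, h4, h5⟩ := cycle_start_two_nbrs hrot
  exact ⟨p, p', hmem p h1, hmem p' h2, h3, h4, h5⟩

private lemma degenerate_count {V : Type*} [Fintype V] [DecidableEq V] {G : SimpleGraph V}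
    [DecidableRel G.Adj]
    (hdeg : ∀ s : Finset V, s.Nonempty → ∃ v ∈ s,
      ∀ p ∈ s, ∀ p' ∈ s, G.Adj v p → G.Adj v p' → p = p') :
    ∀ s : Finset V, ((s ×ˢ s).filter fun pq => G.Adj pq.1 pq.2).card ≤ 2 * (s.card - 1) := by
  intro s
  induction s using Finset.strongInduction with
  | _ s ih =>
    rcases s.eq_empty_or_nonempty with rfl | hne
    · simp
    obtain ⟨v, hv, hv1⟩ := hdeg s hne
    have hss : s.erase v ⊂ s := Finset.erase_ssubset hv
    have ihs := ih _ hss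
    have hcard : (s.erase v).card = s.card - 1 := Finset.card_erase_of_mem hv
    by_cases hnb : ∃ w ∈ s, G.Adj v w
    · obtain ⟨w, hw, hadjw⟩ := hnb
      have hwv : w ≠ v := fun h => G.irrefl (h ▸ hadjw)
      have hsub : ((s ×ˢ s).filter fun pq => G.Adj pq.1 pq.2) ⊆
          (((s.erase v) ×ˢ (s.erase v)).filter fun pq => G.Adj pq.1 pq.2) ∪ {(v, w), (w, v)} := by
        rintro ⟨a, b⟩ hab
        rw [Finset.mem_filter, Finset.mem_product] at hab
        obtain ⟨⟨ha, hb⟩, hadj⟩ := hab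
        rcases eq_or_ne a v with rfl | hav
        · have : b = w := hv1 b hb w hw hadj hadjw
          subst this
          exact Finset.mem_union_right _ (by simp)
        rcases eq_or_ne b v with rfl | hbv
        · have : a = w := hv1 a ha w hw hadj.symm hadjw
          subst this
          exact Finset.mem_union_right _ (by simp)
        · refine Finset.mem_union_left _ ?_
          rw [Finset.mem_filter, Finset.mem_product]
          exact ⟨⟨Finset.mem_erase.2 ⟨hav, ha⟩, Finset.mem_erase.2 ⟨hbv, hb⟩⟩, hadj⟩
      have h2 : s.card ≥ 2 := by
        have := Finset.one_lt_card.2 ⟨w, hw, v, hv, hwv⟩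
        omega
      calc ((s ×ˢ s).filter fun pq => G.Adj pq.1 pq.2).card
          ≤ (((s.erase v) ×ˢ (s.erase v)).filter fun pq => G.Adj pq.1 pq.2).card
            + ({(v, w), (w, v)} : Finset (V × V)).card :=
            le_trans (Finset.card_le_card hsub) (Finset.card_union_le _ _)
        _ ≤ 2 * ((s.erase v).card - 1) + 2 := by
            have : ({(v, w), (w, v)} : Finset (V × V)).card ≤ 2 :=
              Finset.card_insert_le _ _ |>.trans (by simp)
            omega
        _ ≤ 2 * (s.card - 1) := by omega
    · have hsub : ((s ×ˢ s).filter fun pq => G.Adj pq.1 pq.2) ⊆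
          (((s.erase v) ×ˢ (s.erase v)).filter fun pq => G.Adj pq.1 pq.2) := by
        rintro ⟨a, b⟩ hab
        rw [Finset.mem_filter, Finset.mem_product] at hab
        obtain ⟨⟨ha, hb⟩, hadj⟩ := hab
        have hav : a ≠ v := by rintro rfl; exact hnb ⟨b, hb, hadj⟩
        have hbv : b ≠ v := by rintro rfl; exact hnb ⟨a, ha, hadj.symm⟩
        rw [Finset.mem_filter, Finset.mem_product]
        exact ⟨⟨Finset.mem_erase.2 ⟨hav, ha⟩, Finset.mem_erase.2 ⟨hbv, hb⟩⟩, hadj⟩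
      calc ((s ×ˢ s).filter fun pq => G.Adj pq.1 pq.2).card
          ≤ 2 * ((s.erase v).card - 1) := le_trans (Finset.card_le_card hsub) ihs
        _ ≤ 2 * (s.card - 1) := by omega

/-- Let `G` be a graph on `m` vertices where vertex `i` carries real parameters
`(x i, y i)`, with all `x i` distinct and all `y i` distinct, satisfying:
(i) `(x i - x j)² ≤ y i - y j` whenever `x j < x i` (so `y` is ordered like `x`),
and (ii) `i` and `j` are adjacent exactly when `(x i - x j)² = |y i - y j|`.
Then `G` contains no cycle; in particular `G` has at most `m - 1` edges. -/
theorem stmt8 (m : ℕ) (x y : Fin m → ℝ)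
    (hx : Function.Injective x) (hy : Function.Injective y)
    (hord : ∀ i j, x j < x i → (x i - x j) ^ 2 ≤ y i - y j)
    (G : SimpleGraph (Fin m))
    (hG : ∀ i j, G.Adj i j ↔ i ≠ j ∧ (x i - x j) ^ 2 = |y i - y j|) :
    G.IsAcyclic ∧ G.edgeSet.ncard ≤ m - 1 := by
  classical
  -- adjacent pairs are "tight"
  have tight : ∀ {i j}, G.Adj i j → x i < x j → y j - y i = (x j - x i) ^ 2 := by
    intro i j hadj hxij
    obtain ⟨hne, heq⟩ := (hG i j).1 hadj
    have h1 := hord j i hxij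
    have hxne : x j - x i ≠ 0 := sub_ne_zero.2 (ne_of_gt hxij)
    have hpos : (0:ℝ) < (x j - x i) ^ 2 := by positivity
    have habs : |y i - y j| = y j - y i := by
      rw [abs_sub_comm]
      exact abs_of_pos (by nlinarith)
    rw [habs] at heq
    nlinarith [heq]
  -- a vertex cannot have neighbors on both sides
  have obsA : ∀ {u v w}, G.Adj v u → G.Adj v w → x u < x v → x v < x w → False := by
    intro u v w h1 h2 hx1 hx2
    have t1 := tight h1.symm hx1
    have t2 := tight h2 hx2
    have t3 := hord w u (hx1.trans hx2)
    nlinarith [mul_pos (sub_pos.mpr hx1) (sub_pos.mpr hx2)]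
  -- no nonempty set in which every vertex has two distinct neighbors
  have core : ∀ S : Finset (Fin m), S.Nonempty →
      (∀ u ∈ S, ∃ p p', p ∈ S ∧ p' ∈ S ∧ p ≠ p' ∧ G.Adj u p ∧ G.Adj u p') → False := by
    intro S hSne h2
    set T := S.filter (fun v => ∃ u ∈ S, G.Adj v u ∧ x u < x v) with hTdef
    have hTne : T.Nonempty := by
      obtain ⟨v, hv, hvmax⟩ := S.exists_max_image x hSne
      obtain ⟨p, p', hpS, hp'S, hne, ha, ha'⟩ := h2 v hv
      have hpv : p ≠ v := fun h => G.irrefl (h ▸ ha)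
      have hlt : x p < x v := lt_of_le_of_ne (hvmax p hpS) (fun h => hpv (hx h))
      exact ⟨v, Finset.mem_filter.2 ⟨hv, ⟨p, hpS, ha, hlt⟩⟩⟩
    obtain ⟨b, hbT, hbmin⟩ := T.exists_min_image x hTne
    obtain ⟨hbS, u₀, hu₀S, hu₀adj, hu₀x⟩ := Finset.mem_filter.1 hbT
    -- every neighbor of b is to its left
    have hleft : ∀ z, G.Adj b z → x z < x b := by
      intro z hz
      rcases lt_trichotomy (x z) (x b) with h | h | h
      · exact h
      · exact absurd (hx h) (fun hzb => G.irrefl (hzb ▸ hz))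
      · exact absurd (obsA hu₀adj hz hu₀x h) not_false
    -- key step
    have key : ∀ pa pb, pa ∈ S → pb ∈ S → G.Adj b pa → G.Adj b pb → x pa < x pb → False := by
      intro pa pb hpaS hpbS ha hb hxab
      have hbxa : x pa < x b := hleft pa ha
      have hbxb : x pb < x b := hleft pb hb
      obtain ⟨r, r', hrS, hr'S, hrr', har, har'⟩ := h2 pb hpbS
      -- pick a neighbor q of pb distinct from b
      have main : ∀ q, q ∈ S → q ≠ b → G.Adj pb q → False := by
        intro q hqS hqb hq
        have hqx : x pb < x q := by
          rcases lt_trichotomy (x q) (x pb) with h | h | h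
          · exact absurd (obsA hq hb.symm h hbxb) not_false
          · exact absurd (hx h) (fun h' => G.irrefl (h' ▸ hq))
          · exact h
        have hqT : q ∈ T := Finset.mem_filter.2 ⟨hqS, ⟨pb, hpbS, hq.symm, hqx⟩⟩
        have hbq : x b < x q := lt_of_le_of_ne (hbmin q hqT) (fun h => hqb (hx h.symm))
        have t1 : y b - y pa = (x b - x pa) ^ 2 := tight ha.symm hbxa
        have t2 : y b - y pb = (x b - x pb) ^ 2 := tight hb.symm hbxb
        have t3 : y q - y pb = (x q - x pb) ^ 2 := tight hq hqx
        have t4 : (x q - x pa) ^ 2 ≤ y q - y pa := hord q pa (hxab.trans (hbxb.trans hbq))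
        nlinarith [mul_pos (sub_pos.mpr hxab) (sub_pos.mpr hbq)]
      rcases eq_or_ne r b with rfl | hrb
      · exact main r' hr'S (fun h => hrr' h.symm) har'
      · exact main r hrS hrb har
    obtain ⟨p, p', hpS, hp'S, hpp', hadjp, hadjp'⟩ := h2 b hbS
    rcases lt_trichotomy (x p) (x p') with h | h | h
    · exact key p p' hpS hp'S hadjp hadjp' h
    · exact hpp' (hx h)
    · exact key p' p hp'S hpS hadjp' hadjp h
  have hacyc : G.IsAcyclic := by
    intro v c hc
    apply core c.support.toFinset ⟨v, List.mem_toFinset.2 c.start_mem_support⟩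
    intro u hu
    obtain ⟨p, p', h1, h2, h3, h4, h5⟩ := cycle_two_nbrs hc (List.mem_toFinset.1 hu)
    exact ⟨p, p', List.mem_toFinset.2 h1, List.mem_toFinset.2 h2, h3, h4, h5⟩
  refine ⟨hacyc, ?_⟩
  -- edge count
  have hdeg : ∀ s : Finset (Fin m), s.Nonempty → ∃ v ∈ s,
      ∀ p ∈ s, ∀ p' ∈ s, G.Adj v p → G.Adj v p' → p = p' := by
    intro s hs
    by_contra hcon
    push_neg at hcon
    apply core s hs
    intro u hu
    obtain ⟨p, hpS, p', hp'S, hadjp, hadjp', hne⟩ := hcon u hu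
    exact ⟨p, p', hpS, hp'S, hne, hadjp, hadjp'⟩
  have hcount := degenerate_count (G := G) hdeg Finset.univ
  rw [Finset.univ_product_univ] at hcount
  have h2m : 2 * G.edgeFinset.card = (Finset.univ.filter fun (pq : Fin m × Fin m) =>
      G.Adj pq.1 pq.2).card := by
    rw [SimpleGraph.two_mul_card_edgeFinset]
  have hncard : G.edgeSet.ncard = G.edgeFinset.card := by
    rw [SimpleGraph.edgeFinset, Set.ncard_eq_toFinset_card']
  rw [hncard]
  have hm : (Finset.univ : Finset (Fin m)).card = m := by simp
  omega
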